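/- Let X be a closed subspace of ℓ∞ which contains the canonical copy of c₀. Then, given x in the closed unit ball of X, there are two sequences (yₙ), (zₙ) in the unit sphere of X that both converge weakly to x and such that eₙ*(yₙ − zₙ) = 2 for every n ∈ ℕ, where eₙ* denotes the n-th coordinate functional on X. -/

import Mathlib

noncomputable section
open NormedSpace Filter Topology

/-- The space `ℓ∞` of bounded real sequences. -/
abbrev ellInfty : Type := lp (fun _ : ℕ => ℝ) ⊤

set_option maxHeartbeats 1000000 in
theorem two_sequences_in_sphere_weakly_converging
    (X : Submodule ℝ ellInfty) (hX : IsClosed (X : Set ellInfty))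
    (hc0 : ∀ y : ellInfty, Tendsto (fun n => y n) atTop (𝓝 (0 : ℝ)) → y ∈ X)
    (x : X) (hx : ‖x‖ ≤ 1) :
    ∃ y z : ℕ → X, (∀ n, ‖y n‖ = 1) ∧ (∀ n, ‖z n‖ = 1) ∧
      (∀ f : StrongDual ℝ X, Tendsto (fun k => f (y k)) atTop (𝓝 (f x))) ∧
      (∀ f : StrongDual ℝ X, Tendsto (fun k => f (z k)) atTop (𝓝 (f x))) ∧
      ∀ n : ℕ, (y n : ellInfty) n - (z n : ellInfty) n = 2 := by
  have hs : ∀ n k : ℕ, (lp.single ⊤ n (1 : ℝ) : ellInfty) k = if k = n then 1 else 0 := by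
    intro n k
    by_cases h : k = n
    · subst h; simp [lp.single_apply]
    · simp [lp.single_apply, h]
  have hem : ∀ n, lp.single ⊤ n (1 : ℝ) ∈ X := by
    intro n
    apply hc0
    refine Tendsto.congr' ?_ tendsto_const_nhds
    filter_upwards [eventually_gt_atTop n] with k hk
    rw [hs]
    simp [hk.ne']
  set e : ℕ → X := fun n => ⟨lp.single ⊤ n 1, hem n⟩ with he
  have he_apply : ∀ n k : ℕ, (e n : ellInfty) k = if k = n then 1 else 0 := fun n k => hs n k
  have hxk : ∀ k, |(x : ellInfty) k| ≤ 1 := by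
    intro k
    have := lp.norm_apply_le_norm (p := ⊤) ENNReal.top_ne_zero (x : ellInfty) k
    rw [← Submodule.coe_norm] at this
    simp only [Real.norm_eq_abs] at this
    exact this.trans hx
  set a : ℕ → ℝ := fun n => 1 - (x : ellInfty) n with ha
  set b : ℕ → ℝ := fun n => 1 + (x : ellInfty) n with hb
  set y : ℕ → X := fun n => x + a n • e n with hy
  set z : ℕ → X := fun n => x - b n • e n with hz
  have hyk : ∀ n k, (y n : ellInfty) k = (x : ellInfty) k + a n * (if k = n then 1 else 0) := by
    intro n k
    simp only [hy, Submodule.coe_add, Submodule.coe_smul, lp.coeFn_add, Pi.add_apply,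
      lp.coeFn_smul, Pi.smul_apply, smul_eq_mul]
    rw [hs]
  have hzk : ∀ n k, (z n : ellInfty) k = (x : ellInfty) k - b n * (if k = n then 1 else 0) := by
    intro n k
    simp only [hz, Submodule.coe_sub, Submodule.coe_smul, lp.coeFn_sub, Pi.sub_apply,
      lp.coeFn_smul, Pi.smul_apply, smul_eq_mul]
    rw [hs]
  -- norms
  have hnorm1 : ∀ (w : X), (∀ k, |(w : ellInfty) k| ≤ 1) →
      (∃ k, (w : ellInfty) k = 1 ∨ (w : ellInfty) k = -1) → ‖w‖ = 1 := by
    rintro w hle ⟨k, hk⟩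
    rw [Submodule.coe_norm]
    refine le_antisymm ?_ ?_
    · refine lp.norm_le_of_forall_le zero_le_one fun i => ?_
      simpa [Real.norm_eq_abs] using hle i
    · have h := lp.norm_apply_le_norm (p := ⊤) ENNReal.top_ne_zero (w : ellInfty) k
      have h1 : ‖(w : ellInfty) k‖ = 1 := by
        rcases hk with hk | hk <;> rw [hk] <;> norm_num
      rw [h1] at h
      exact h
  have hy_norm : ∀ n, ‖y n‖ = 1 := by
    intro n
    refine hnorm1 _ (fun k => ?_) ⟨n, Or.inl ?_⟩
    · rw [hyk]
      by_cases h : k = n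
      · have : (x : ellInfty) k + a n * (if k = n then 1 else 0) = 1 := by
          rw [if_pos h, h, ha]; ring
        rw [this]; norm_num
      · rw [if_neg h]; simpa using hxk k
    · rw [hyk, if_pos rfl, ha]; ring
  have hz_norm : ∀ n, ‖z n‖ = 1 := by
    intro n
    refine hnorm1 _ (fun k => ?_) ⟨n, Or.inr ?_⟩
    · rw [hzk]
      by_cases h : k = n
      · have : (x : ellInfty) k - b n * (if k = n then 1 else 0) = -1 := by
          rw [if_pos h, h, hb]; ring
        rw [this]; norm_num
      · rw [if_neg h]; simpa using hxk k
    · rw [hzk, if_pos rfl, hb]; ring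
  -- key : f (e n) → 0 for every functional f
  have key : ∀ f : StrongDual ℝ X, Tendsto (fun n => f (e n)) atTop (𝓝 0) := by
    intro f
    have hsum : Summable (fun n => |f (e n)|) := by
      apply summable_of_sum_range_le (fun n => abs_nonneg _)
      intro n
      set σ : ℕ → ℝ := fun i => if 0 ≤ f (e i) then 1 else -1 with hσ
      have h1 : ∑ i ∈ Finset.range n, |f (e i)| = f (∑ i ∈ Finset.range n, σ i • e i) := by
        rw [map_sum]
        refine Finset.sum_congr rfl fun i _ => ?_
        rw [map_smul, smul_eq_mul, hσ]
        by_cases h : 0 ≤ f (e i)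
        · simp only [if_pos h]; rw [abs_of_nonneg h, one_mul]
        · simp only [if_neg h]; rw [abs_of_neg (lt_of_not_ge h)]; ring
      have hnorm : ‖∑ i ∈ Finset.range n, σ i • e i‖ ≤ 1 := by
        rw [Submodule.coe_norm]
        refine lp.norm_le_of_forall_le zero_le_one fun k => ?_
        have hco : ((∑ i ∈ Finset.range n, σ i • e i : X) : ellInfty) k
            = ∑ i ∈ Finset.range n, σ i * (if k = i then 1 else 0) := by
          rw [Submodule.coe_sum]
          rw [lp.coeFn_sum, Finset.sum_apply]
          refine Finset.sum_congr rfl fun i _ => ?_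
          rw [Submodule.coe_smul, lp.coeFn_smul, Pi.smul_apply, smul_eq_mul, he_apply]
        rw [Real.norm_eq_abs, hco]
        have h2 : ∑ i ∈ Finset.range n, σ i * (if k = i then 1 else 0)
            = if k ∈ Finset.range n then σ k else 0 := by
          simp [mul_ite, Finset.sum_ite_eq]
        rw [h2]
        by_cases hmem : k ∈ Finset.range n
        · rw [if_pos hmem]
          have hrfl : σ k = if 0 ≤ f (e k) then 1 else -1 := rfl
          rw [hrfl]
          by_cases h0 : 0 ≤ f (e k)
          · rw [if_pos h0]; norm_num
          · rw [if_neg h0]; norm_num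
        · rw [if_neg hmem]; norm_num
      rw [h1]
      have h3 := f.le_opNorm (∑ i ∈ Finset.range n, σ i • e i)
      rw [Real.norm_eq_abs] at h3
      calc f (∑ i ∈ Finset.range n, σ i • e i)
          ≤ ‖f‖ * ‖∑ i ∈ Finset.range n, σ i • e i‖ := (le_abs_self _).trans h3
        _ ≤ ‖f‖ * 1 := mul_le_mul_of_nonneg_left hnorm (norm_nonneg f)
        _ = ‖f‖ := mul_one _
    have habs := hsum.tendsto_atTop_zero
    rw [tendsto_zero_iff_norm_tendsto_zero]
    simpa [Real.norm_eq_abs] using habs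
  have haux : ∀ (c : ℕ → ℝ), (∀ n, |c n| ≤ 2) → ∀ f : StrongDual ℝ X,
      Tendsto (fun k => c k * f (e k)) atTop (𝓝 0) := by
    intro c hc f
    have ht : Tendsto (fun k => 2 * |f (e k)|) atTop (𝓝 0) := by
      simpa using ((key f).abs.const_mul 2)
    refine squeeze_zero_norm (fun k => ?_) ht
    rw [Real.norm_eq_abs, abs_mul]
    exact mul_le_mul_of_nonneg_right (hc k) (abs_nonneg _)
  refine ⟨y, z, hy_norm, hz_norm, ?_, ?_, ?_⟩
  · intro f
    have hf : ∀ k, f (y k) = f x + a k * f (e k) := by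
      intro k; rw [hy]; simp only [map_add, map_smul, smul_eq_mul]
    simp only [hf]
    have hbound : ∀ n, |a n| ≤ 2 := by
      intro n
      obtain ⟨hl, hr⟩ := abs_le.1 (hxk n)
      have hrfl : a n = 1 - (x : ellInfty) n := rfl
      rw [hrfl, abs_le]
      constructor <;> linarith
    have h2 := haux a hbound f
    simpa using (tendsto_const_nhds (x := f x)).add h2
  · intro f
    have hf : ∀ k, f (z k) = f x - b k * f (e k) := by
      intro k; rw [hz]; simp only [map_sub, map_smul, smul_eq_mul]
    simp only [hf]
    have hbound : ∀ n, |b n| ≤ 2 := by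
      intro n
      obtain ⟨hl, hr⟩ := abs_le.1 (hxk n)
      have hrfl : b n = 1 + (x : ellInfty) n := rfl
      rw [hrfl, abs_le]
      constructor <;> linarith
    have h2 := haux b hbound f
    simpa using (tendsto_const_nhds (x := f x)).sub h2
  · intro n
    rw [hyk, hzk, if_pos rfl, ha, hb]
    ring
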